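/- For any decorated tree T' whose root has a unique child which is an internal node, Π_T(T') is a decorated tree, and there exists a unique integer j with 1 ≤ j ≤ fl(Π_T(T')) such that T' = Δ_T(Π_T(T'), j). -/

import Mathlib

/-- Rooted plane trees with integer labels on the leaves. -/
inductive DTree where
  | leaf : ℤ → DTree
  | node : List DTree → DTree

mutual
/-- The list of leaf labels of a tree, in left-to-right (prefix traversal) order. -/
def leafLabels : DTree → List ℤ
  | .leaf l => [l]
  | .node ts => leafLabelsList ts
def leafLabelsList : List DTree → List ℤ
  | [] => []
  | t :: ts => leafLabels t ++ leafLabelsList ts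
end

/-- The three conditions of decorated trees, for a subtree whose root is at depth `d`:
leaf labels are at least -1 and strictly less than the depth of their parent;
every internal node of positive depth `d` has a descendant leaf labeled at most `d - 2`;
and in any direct subtree of an internal node of depth `d`, a leaf labeled `d` is
preceded in traversal order only by leaves labeled at least `d`. -/
inductive DecoAt : DTree → ℕ → Prop where
  | leaf {l : ℤ} {d : ℕ} (h1 : -1 ≤ l) (h2 : l < (d : ℤ) - 1) : DecoAt (.leaf l) d
  | node {ts : List DTree} {d : ℕ} (hne : ts ≠ [])
      (h2 : 0 < d → ∃ x ∈ leafLabelsList ts, x ≤ (d : ℤ) - 2)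
      (h3 : ∀ t' ∈ ts, ∀ a b, leafLabels t' = a ++ (d : ℤ) :: b → ∀ x ∈ a, (d : ℤ) ≤ x)
      (h4 : ∀ t' ∈ ts, DecoAt t' (d + 1)) : DecoAt (.node ts) d

/-- A decorated tree: the root is at depth 0. -/
def IsDeco (T : DTree) : Prop := DecoAt T 0

/-- The number of free leaves (leaves labeled -1). -/
def fl (T : DTree) : ℕ := (leafLabels T).count (-1)

mutual
/-- Increment leaf labels, where the counter `m` is the number of free leaves (from
the left) that still must be incremented; once it reaches 0, remaining free leaves
are left untouched. Returns the new tree and the remaining counter. -/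
def incUpTo : DTree → ℕ → DTree × ℕ
  | .leaf l, m =>
      if l = -1 then (if 0 < m then (.leaf 0, m - 1) else (.leaf (-1), m))
      else (.leaf (l + 1), m)
  | .node ts, m =>
      let p := incList ts m
      (.node p.1, p.2)
def incList : List DTree → ℕ → List DTree × ℕ
  | [], m => ([], m)
  | t :: ts, m =>
      let p := incUpTo t m
      let q := incList ts p.2
      (p.1 :: q.1, q.2)
end

/-- Δ_T(T,i): attach `T` under a new root vertex and add 1 to every leaf label,
except for the last `i` free leaves (in traversal order). -/
def deltaT (T : DTree) (i : ℕ) : DTree := .node [(incUpTo T (fl T - i)).1]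

mutual
/-- Subtract 1 from every non-free leaf label. -/
def decLeaves : DTree → DTree
  | .leaf l => if l = -1 then .leaf (-1) else .leaf (l - 1)
  | .node ts => .node (decList ts)
def decList : List DTree → List DTree
  | [] => []
  | t :: ts => decLeaves t :: decList ts
end

/-- Π_T: remove the root (which has a unique child) and subtract 1 from every
non-free leaf label. -/
def piT : DTree → DTree
  | .node [t] => decLeaves t
  | t => t


/-! ### Auxiliary lemmas -/

/-- The effect of `decLeaves` on a single label. -/
def dmap (l : ℤ) : ℤ := if l = -1 then -1 else l - 1

mutual
theorem labels_dec : ∀ t : DTree, leafLabels (decLeaves t) = (leafLabels t).map dmap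
  | .leaf l => by by_cases h : l = -1 <;> simp [decLeaves, leafLabels, dmap, h]
  | .node ts => by
      simp only [decLeaves, leafLabels]
      exact labels_decList ts
theorem labels_decList :
    ∀ ts : List DTree, leafLabelsList (decList ts) = (leafLabelsList ts).map dmap
  | [] => rfl
  | t :: ts => by
      simp only [decList, leafLabelsList, List.map_append]
      rw [labels_dec t, labels_decList ts]
end

theorem decList_eq_map : ∀ ts : List DTree, decList ts = ts.map decLeaves
  | [] => rfl
  | t :: ts => by rw [decList, List.map_cons, decList_eq_map ts]

theorem mem_labelsList (x : ℤ) (ts : List DTree) :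
    x ∈ leafLabelsList ts ↔ ∃ t ∈ ts, x ∈ leafLabels t := by
  induction ts with
  | nil => simp [leafLabelsList]
  | cons t ts ih => simp [leafLabelsList, ih]

theorem deco_ge_neg1 {t : DTree} {d : ℕ} (h : DecoAt t d) : ∀ x ∈ leafLabels t, -1 ≤ x := by
  induction h with
  | leaf h1 h2 => intro x hx; simp [leafLabels] at hx; omega
  | @node ts d hne h2 h3 h4 ih =>
      intro x hx
      have : x ∈ leafLabelsList ts := hx
      obtain ⟨t', ht', hx'⟩ := (mem_labelsList x ts).1 this
      exact ih t' ht' x hx'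

theorem dec_deco {t : DTree} {e : ℕ} (h : DecoAt t e) : ∀ d : ℕ, e = d + 1 →
    (1 ≤ d ∨ ∃ us, t = DTree.node us) → DecoAt (decLeaves t) d := by
  induction h with
  | @leaf l e h1 h2 =>
      intro d he hd
      subst he
      rcases hd with hd | ⟨us, hus⟩
      · by_cases hl : l = -1
        · subst hl
          simp only [decLeaves, if_pos rfl]
          exact DecoAt.leaf (by norm_num) (by omega)
        · simp only [decLeaves, if_neg hl]
          exact DecoAt.leaf (by omega) (by push_cast at h2; omega)
      · exact absurd hus (by simp)
  | @node ts e hne h2 h3 h4 ih =>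
      intro d he hd
      subst he
      show DecoAt (DTree.node (decList ts)) d
      refine DecoAt.node ?_ ?_ ?_ ?_
      · rw [decList_eq_map]; simpa using hne
      · intro hdpos
        obtain ⟨x, hx, hxle⟩ := h2 (by omega)
        refine ⟨dmap x, ?_, ?_⟩
        · rw [labels_decList]; exact List.mem_map_of_mem hx
        · unfold dmap; push_cast at hxle ⊢; split <;> omega
      · intro t'' ht'' a b hab x hxa
        rw [decList_eq_map] at ht''
        obtain ⟨t', ht', rfl⟩ := List.mem_map.1 ht''
        rw [labels_dec] at hab
        obtain ⟨a', rest, hsplit, ha', hrest⟩ := List.map_eq_append_iff.1 hab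
        obtain ⟨c', b', hrest2, hc', hb'⟩ := List.map_eq_cons_iff.1 hrest
        have hc : c' = (d : ℤ) + 1 := by
          unfold dmap at hc'; split at hc' <;> omega
        have h3app := h3 t' ht' a' b' (by rw [hsplit, hrest2, hc]; push_cast; ring_nf)
        rw [← ha'] at hxa
        obtain ⟨x', hx', rfl⟩ := List.mem_map.1 hxa
        have hx'ge := h3app x' hx'
        push_cast at hx'ge ⊢
        unfold dmap; split <;> omega
      · intro t'' ht''
        rw [decList_eq_map] at ht''
        obtain ⟨t', ht', rfl⟩ := List.mem_map.1 ht''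
        exact ih t' ht' (d + 1) rfl (Or.inl (by omega))

/-- In the list `L`, no `-1` occurs before a `0`. -/
def NoFreeBeforeZero (L : List ℤ) : Prop := ∀ a b, L = a ++ (0 : ℤ) :: b → (-1 : ℤ) ∉ a

theorem nfbz_left {A B : List ℤ} (h : NoFreeBeforeZero (A ++ B)) : NoFreeBeforeZero A := by
  intro a b hab
  exact h a (b ++ B) (by rw [hab]; simp)

theorem nfbz_right {A B : List ℤ} (h : NoFreeBeforeZero (A ++ B)) : NoFreeBeforeZero B := by
  intro a b hab hm
  exact h (A ++ a) b (by rw [hab]; simp) (by simp [hm])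

theorem nfbz_zero_right {A B : List ℤ} (h : NoFreeBeforeZero (A ++ B)) (h0 : (0 : ℤ) ∈ B) :
    (-1 : ℤ) ∉ A := by
  obtain ⟨s, t, hB⟩ := List.append_of_mem h0
  intro hm
  exact h (A ++ s) t (by rw [hB]; simp) (by simp [hm])

mutual
theorem incA : ∀ (t : DTree) (m : ℕ),
    NoFreeBeforeZero (leafLabels t) →
    (leafLabels t).count 0 ≤ m →
    ((leafLabels t).count 0 < m → (leafLabels t).count (-1) = 0) →
    incUpTo (decLeaves t) m = (t, m - (leafLabels t).count 0)
  | .leaf l, m => by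
      intro h1 h2 h3
      by_cases hl : l = -1
      · subst hl
        have hm : m = 0 := by
          by_contra hm
          have := h3 (by simp [leafLabels]; omega)
          simp [leafLabels] at this
        subst hm
        simp [decLeaves, incUpTo, leafLabels]
      · by_cases hl0 : l = 0
        · subst hl0
          have hm : 0 < m := by simp [leafLabels] at h2; omega
          simp [decLeaves, incUpTo, leafLabels, hm]
        · have h1' : l - 1 ≠ -1 := by omega
          simp [decLeaves, incUpTo, leafLabels, hl, hl0, h1', List.count_singleton]
  | .node us, m => by
      intro h1 h2 h3
      have key := incAList us m h1 h2 h3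
      show incUpTo (DTree.node (decList us)) m = _
      simp only [incUpTo]
      rw [key]
      rfl
theorem incAList : ∀ (us : List DTree) (m : ℕ),
    NoFreeBeforeZero (leafLabelsList us) →
    (leafLabelsList us).count 0 ≤ m →
    ((leafLabelsList us).count 0 < m → (leafLabelsList us).count (-1) = 0) →
    incList (decList us) m = (us, m - (leafLabelsList us).count 0)
  | [], m => by intro _ _ _; simp [decList, incList, leafLabelsList]
  | u :: us, m => by
      intro h1 h2 h3
      have hL : leafLabelsList (u :: us) = leafLabels u ++ leafLabelsList us := rfl
      rw [hL] at h1 h2 h3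
      rw [List.count_append] at h2 h3
      have h3A : (leafLabels u).count 0 < m → (leafLabels u).count (-1) = 0 := by
        intro hlt
        by_cases hB0 : (leafLabelsList us).count 0 = 0
        · have := h3 (by omega)
          rw [List.count_append] at this; omega
        · have h0B : (0 : ℤ) ∈ leafLabelsList us := by
            rw [← List.count_pos_iff]; omega
          exact List.count_eq_zero.2 (nfbz_zero_right h1 h0B)
      have hstep1 := incA u m (nfbz_left h1) (by omega) h3A
      have h3B : (leafLabelsList us).count 0 < m - (leafLabels u).count 0 →
          (leafLabelsList us).count (-1) = 0 := by
        intro hlt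
        have := h3 (by omega)
        rw [List.count_append] at this; omega
      have hstep2 := incAList us (m - (leafLabels u).count 0) (nfbz_right h1) (by omega) h3B
      show incList (decLeaves u :: decList us) m = _
      rw [incList, hstep1]
      simp only [hstep2, hL, List.count_append, Prod.mk.injEq, List.cons.injEq]
      exact ⟨trivial, by omega⟩
end

mutual
theorem incB : ∀ (t : DTree) (m : ℕ), (∀ x ∈ leafLabels t, -1 ≤ x) →
    (incUpTo t m).2 = m - (leafLabels t).count (-1) ∧
    (leafLabels (incUpTo t m).1).count (-1) = (leafLabels t).count (-1) - m
  | .leaf l, m => by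
      intro hge
      by_cases hl : l = -1
      · subst hl
        by_cases hm : 0 < m
        · simp [incUpTo, leafLabels, hm]; omega
        · simp [incUpTo, leafLabels, hm]; omega
      · have hge' : 0 ≤ l := by have := hge l (by simp [leafLabels]); omega
        have : l + 1 ≠ -1 := by omega
        simp [incUpTo, leafLabels, hl, this, List.count_singleton]
  | .node us, m => by
      intro hge
      have key := incBList us m hge
      show (incUpTo (DTree.node us) m).2 = _ ∧ _
      simp only [incUpTo]
      exact key
theorem incBList : ∀ (us : List DTree) (m : ℕ),
    (∀ x ∈ leafLabelsList us, -1 ≤ x) →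
    (incList us m).2 = m - (leafLabelsList us).count (-1) ∧
    (leafLabelsList (incList us m).1).count (-1) = (leafLabelsList us).count (-1) - m
  | [], m => by intro _; simp [incList, leafLabelsList]
  | u :: us, m => by
      intro hge
      have hL : leafLabelsList (u :: us) = leafLabels u ++ leafLabelsList us := rfl
      rw [hL] at hge
      have hgeA : ∀ x ∈ leafLabels u, -1 ≤ x := fun x hx => hge x (by simp [hx])
      have hgeB : ∀ x ∈ leafLabelsList us, -1 ≤ x := fun x hx => hge x (by simp [hx])
      obtain ⟨hp2, hp1⟩ := incB u m hgeA
      obtain ⟨hq2, hq1⟩ := incBList us (incUpTo u m).2 hgeB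
      rw [incList]
      constructor
      · rw [hq2, hp2, hL, List.count_append]; omega
      · show (leafLabelsList ((incUpTo u m).1 :: (incList us (incUpTo u m).2).1)).count (-1) = _
        have : leafLabelsList ((incUpTo u m).1 :: (incList us (incUpTo u m).2).1)
            = leafLabels (incUpTo u m).1 ++ leafLabelsList (incList us (incUpTo u m).2).1 := rfl
        rw [this, List.count_append, hp1, hq1, hp2, hL, List.count_append]
        omega
end

theorem count_map_dmap : ∀ L : List ℤ,
    (L.map dmap).count (-1) = L.count (-1) + L.count 0 := by
  intro L
  induction L with
  | nil => simp
  | cons a L ih =>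
      simp only [List.map_cons, List.count_cons, ih]
      have : (dmap a = -1) ↔ (a = -1 ∨ a = 0) := by unfold dmap; split <;> omega
      by_cases h1 : a = -1
      · simp only [h1, dmap, if_pos rfl, if_true]
        simp
        omega
      · by_cases h0 : a = 0
        · subst h0
          have hd : dmap 0 = -1 := by simp [dmap]
          simp [hd, h1]
          omega
        · have hd : dmap a ≠ -1 := by unfold dmap; split <;> omega
          simp [hd, h1, h0]

theorem stmt4 (ts : List DTree) (h : IsDeco (.node [.node ts])) :
    IsDeco (piT (.node [.node ts])) ∧
    ∃! j : ℕ, 1 ≤ j ∧ j ≤ fl (piT (.node [.node ts])) ∧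
      DTree.node [DTree.node ts] = deltaT (piT (.node [.node ts])) j := by
  have hpi : piT (.node [.node ts]) = decLeaves (.node ts) := rfl
  rw [hpi]
  cases h with
  | node hne h2 h3 h4 =>
  have hin : DecoAt (DTree.node ts) 1 := h4 _ (by simp)
  have hdec : IsDeco (decLeaves (DTree.node ts)) := dec_deco hin 0 rfl (Or.inr ⟨ts, rfl⟩)
  have hlabelsPi : leafLabels (decLeaves (DTree.node ts))
      = (leafLabelsList ts).map dmap := labels_dec _
  have hfl : fl (decLeaves (DTree.node ts))
      = (leafLabelsList ts).count (-1) + (leafLabelsList ts).count 0 := by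
    unfold fl
    rw [hlabelsPi, count_map_dmap]
  have hfree : 1 ≤ (leafLabelsList ts).count (-1) := by
    cases hin with
    | node hne' h2' h3' h4' =>
      obtain ⟨x, hx, hxle⟩ := h2' one_pos
      have hge := deco_ge_neg1 (DecoAt.node hne' h2' h3' h4') x hx
      have hx1 : x = -1 := by push_cast at hxle; omega
      subst hx1
      rw [← List.count_pos_iff] at hx
      omega
  have hPred : NoFreeBeforeZero (leafLabelsList ts) := by
    intro a b hab hm
    have := h3 (DTree.node ts) (by simp) a b (by exact_mod_cast hab) (-1) hm
    norm_num at this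
  have key := incA (DTree.node ts) ((leafLabels (DTree.node ts)).count 0) hPred le_rfl
    (by omega)
  rw [show leafLabels (DTree.node ts) = leafLabelsList ts from rfl] at key
  simp only [Nat.sub_self] at key
  constructor
  · exact hdec
  · refine ⟨(leafLabelsList ts).count (-1), ⟨hfree, by omega, ?_⟩, ?_⟩
    · unfold deltaT
      have hsub : fl (decLeaves (DTree.node ts)) - (leafLabelsList ts).count (-1)
          = (leafLabelsList ts).count 0 := by omega
      rw [hsub, key]
    · rintro j ⟨hj1, hj2, hj3⟩
      unfold deltaT at hj3
      simp only [DTree.node.injEq, List.cons.injEq, and_true] at hj3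
      have hB := (incB (decLeaves (DTree.node ts))
          (fl (decLeaves (DTree.node ts)) - j) (deco_ge_neg1 hdec)).2
      rw [← hj3] at hB
      have hcount : (leafLabels (DTree.node ts)).count (-1)
          = (leafLabelsList ts).count (-1) := rfl
      have hflPi : (leafLabels (decLeaves (DTree.node ts))).count (-1)
          = fl (decLeaves (DTree.node ts)) := rfl
      rw [hcount, hflPi] at hB
      omega
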